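/- Let X, Y, and Z be distinct nodes in an MPDAG G. (i) If p is a possibly causal path from X to Y and q is a causal path from Y to Z, then p and q share no node other than Y, and the concatenation p ⊕ q is a possibly causal path from X to Z. (ii) If p is a causal path from X to Y and q is a possibly causal path from Y to Z, then p and q share no node other than Y, and the concatenation p ⊕ q is a possibly causal path from X to Z. -/

import Mathlib

open MeasureTheory
open scoped ENNReal

namespace CondAdj

/-- Edge marks of a (partial) mixed graph.  `Mark.none` means "no edge". -/
inductive Mark : Type
  | none
  | tail
  | arrow
  | circle
  deriving DecidableEq

/-- A marked graph on node type `V`:  `m a b` is the edge mark at `b` of the edge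
between `a` and `b` (`Mark.none` iff `a` and `b` are not adjacent).
A directed edge `a → b` has a tail at `a` and an arrowhead at `b`;
an undirected edge `a − b` (resp. `a ∘-∘ b`) has tails (resp. circles) at both ends;
a bidirected edge `a ↔ b` has arrowheads at both ends. -/
structure MG (V : Type) where
  m : V → V → Mark
  none_symm : ∀ a b, m a b = Mark.none ↔ m b a = Mark.none
  irrefl : ∀ a, m a a = Mark.none

namespace MG

variable {V : Type}

/-- `a` and `b` are adjacent. -/
def Adj (G : MG V) (a b : V) : Prop := G.m a b ≠ Mark.none

/-- Directed edge `a → b`. -/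
def DirE (G : MG V) (a b : V) : Prop := G.m a b = Mark.arrow ∧ G.m b a = Mark.tail

/-- Bidirected edge `a ↔ b`. -/
def BidirE (G : MG V) (a b : V) : Prop := G.m a b = Mark.arrow ∧ G.m b a = Mark.arrow

/-- Undirected edge (`a − b` or `a ∘-∘ b`). -/
def UndirE (G : MG V) (a b : V) : Prop :=
  (G.m a b = Mark.tail ∧ G.m b a = Mark.tail) ∨
    (G.m a b = Mark.circle ∧ G.m b a = Mark.circle)

/-- Edge with an arrowhead at `b` (i.e. `a *→ b`). -/
def IntoE (G : MG V) (a b : V) : Prop := G.m a b = Mark.arrow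

/-- `b` is a descendant of `a` (via a directed path, possibly of length 0). -/
def Desc (G : MG V) (a b : V) : Prop := Relation.ReflTransGen G.DirE a b

/-- Descendants of a set of nodes. -/
def De (G : MG V) (A : Set V) : Set V := {b | ∃ a ∈ A, G.Desc a b}

/-- Ancestors of a set of nodes. -/
def An (G : MG V) (A : Set V) : Set V := {a | ∃ b ∈ A, G.Desc a b}

/-- `p 0, …, p n` is a path in `G` (distinct nodes, consecutive ones adjacent). -/
def IsPath (G : MG V) (p : ℕ → V) (n : ℕ) : Prop :=
  1 ≤ n ∧ (∀ i ≤ n, ∀ j ≤ n, p i = p j → i = j) ∧ ∀ i < n, G.Adj (p i) (p (i + 1))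

/-- A path from `X` to `Y`. -/
def IsPathFromTo (G : MG V) (p : ℕ → V) (n : ℕ) (X Y : Set V) : Prop :=
  G.IsPath p n ∧ p 0 ∈ X ∧ p n ∈ Y

/-- A possibly causal (possibly directed) path: no arrowhead pointing backwards,
i.e. there is no edge `p i ←* p j` for `i < j`. -/
def PossCausal (G : MG V) (p : ℕ → V) (n : ℕ) : Prop :=
  ∀ i j, i < j → j ≤ n → ¬ G.IntoE (p j) (p i)

/-- A causal (directed) path. -/
def Causal (G : MG V) (p : ℕ → V) (n : ℕ) : Prop := ∀ i < n, G.DirE (p i) (p (i + 1))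

/-- The non-endpoint node at position `i` of `p` is a collider. -/
def ColliderAt (G : MG V) (p : ℕ → V) (i : ℕ) : Prop :=
  G.IntoE (p (i - 1)) (p i) ∧ G.IntoE (p (i + 1)) (p i)

/-- The non-endpoint node at position `i` of `p` is a definite non-collider. -/
def DefNonColliderAt (G : MG V) (p : ℕ → V) (i : ℕ) : Prop :=
  G.DirE (p i) (p (i - 1)) ∨ G.DirE (p i) (p (i + 1)) ∨
    (G.UndirE (p (i - 1)) (p i) ∧ G.UndirE (p i) (p (i + 1)) ∧
      ¬ G.Adj (p (i - 1)) (p (i + 1)))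

/-- A definite status path. -/
def DefStatus (G : MG V) (p : ℕ → V) (n : ℕ) : Prop :=
  ∀ i, 1 ≤ i → i < n → G.ColliderAt p i ∨ G.DefNonColliderAt p i

/-- The set `W` blocks the path `p`: some non-collider on `p` is in `W`, or some
collider on `p` has no descendant in `W`. -/
def Blocks (G : MG V) (W : Set V) (p : ℕ → V) (n : ℕ) : Prop :=
  ∃ i, 1 ≤ i ∧ i < n ∧
    ((¬ G.ColliderAt p i ∧ p i ∈ W) ∨
      (G.ColliderAt p i ∧ ∀ d, G.Desc (p i) d → d ∉ W))

/-- Possible descendants (via possibly causal paths; every node is its own). -/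
def PossDe (G : MG V) (A : Set V) : Set V :=
  A ∪ {b | ∃ a ∈ A, ∃ p n, G.IsPath p n ∧ G.PossCausal p n ∧ p 0 = a ∧ p n = b}

/-- Possible ancestors (via possibly causal paths; every node is its own). -/
def PossAn (G : MG V) (A : Set V) : Set V :=
  A ∪ {a | ∃ b ∈ A, ∃ p n, G.IsPath p n ∧ G.PossCausal p n ∧ p 0 = a ∧ p n = b}

end MG

variable {V : Type}

/-- The path `p` is proper w.r.t. `X`: only its first node is in `X`. -/
def Proper (p : ℕ → V) (n : ℕ) (X : Set V) : Prop :=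
  ∀ i, 1 ≤ i → i ≤ n → p i ∉ X

namespace MG

variable {V : Type}

/-- Possible mediators: the nodes other than those in `X` lying on proper possibly
causal paths from `X` to `Y`. -/
def PossMed (G : MG V) (X Y : Set V) : Set V :=
  {w | ∃ p n, G.IsPathFromTo p n X Y ∧ Proper p n X ∧ G.PossCausal p n ∧
      ∃ i, 1 ≤ i ∧ i ≤ n ∧ p i = w}

/-- The forbidden set: possible descendants of the possible mediators. -/
def Forb (G : MG V) (X Y : Set V) : Set V := G.PossDe (G.PossMed X Y)

/-- Mediators: the nodes other than those in `X` lying on proper causal paths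
from `X` to `Y`. -/
def Med (G : MG V) (X Y : Set V) : Set V :=
  {w | ∃ p n, G.IsPathFromTo p n X Y ∧ Proper p n X ∧ G.Causal p n ∧
      ∃ i, 1 ≤ i ∧ i ≤ n ∧ p i = w}

/-- The forbidden set of a DAG: descendants of the mediators. -/
def ForbD (G : MG V) (X Y : Set V) : Set V := G.De (G.Med X Y)

/-- Parents of a node. -/
def Pa (G : MG V) (b : V) : Set V := {a | G.DirE a b}

/-- Parents of a set of nodes:  `(⋃ w ∈ W, Pa w) \ W`. -/
def PaSet (G : MG V) (W : Set V) : Set V := {a | ∃ w ∈ W, G.DirE a w} \ W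

/-- No directed cycles. -/
def Acyclic (G : MG V) : Prop := ∀ a, ¬ Relation.TransGen G.DirE a a

/-- A DAG: all edges directed, no directed cycles. -/
def IsDAG (G : MG V) : Prop :=
  (∀ a b, G.Adj a b → G.DirE a b ∨ G.DirE b a) ∧ G.Acyclic

/-- A partially directed acyclic graph: edges are `→` or `−`, no directed cycles. -/
def IsPDG (G : MG V) : Prop :=
  (∀ a b, G.Adj a b →
      G.DirE a b ∨ G.DirE b a ∨ (G.m a b = Mark.tail ∧ G.m b a = Mark.tail)) ∧
    G.Acyclic

/-- `a → b ← c` is an unshielded collider. -/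
def UnshieldedCollider (G : MG V) (a b c : V) : Prop :=
  G.DirE a b ∧ G.DirE c b ∧ a ≠ c ∧ ¬ G.Adj a c

/-- The class `[G]` of DAGs represented by a partially directed graph `G`: the DAGs
with the same nodes, adjacencies and unshielded colliders as `G` in which every
directed edge of `G` is directed the same way. -/
def rep (G : MG V) : Set (MG V) :=
  {D | D.IsDAG ∧ (∀ a b, D.Adj a b ↔ G.Adj a b) ∧ (∀ a b, G.DirE a b → D.DirE a b) ∧
      ∀ a b c, (D.UnshieldedCollider a b c ↔ G.UnshieldedCollider a b c)}

/-- A maximally oriented PDAG (MPDAG): a PDAG, representing a nonempty class of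
DAGs, whose orientations are complete (every undirected edge is oriented both
ways by DAGs in the represented class). -/
def IsMPDAG (G : MG V) : Prop :=
  G.IsPDG ∧ G.rep.Nonempty ∧
    ∀ a b, G.UndirE a b → (∃ D ∈ G.rep, D.DirE a b) ∧ ∃ D ∈ G.rep, D.DirE b a

end MG

section Density

variable {V : Type} [Fintype V] [DecidableEq V]

/-- Override the coordinates of `v` in `A` by the values `w`. -/
noncomputable def override (v : V → ℝ) (A : Finset V) (w : {x : V // x ∈ A} → ℝ) :
    V → ℝ :=
  fun i => if h : i ∈ A then w ⟨i, h⟩ else v i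

/-- The marginal density of the coordinates in `A` (integrating out `Aᶜ`). -/
noncomputable def marg (f : (V → ℝ) → ℝ≥0∞) (A : Finset V) (v : V → ℝ) : ℝ≥0∞ :=
  ∫⁻ w : {x : V // x ∈ Aᶜ} → ℝ, f (override v Aᶜ w)

/-- The conditional density `f(a | b)` of the coordinates in `A` given those in `B`. -/
noncomputable def condD (f : (V → ℝ) → ℝ≥0∞) (A B : Finset V) (v : V → ℝ) : ℝ≥0∞ :=
  marg f (A ∪ B) v / marg f B v

/-- A (strictly positive) joint density on `V → ℝ`. -/
def IsDensity (f : (V → ℝ) → ℝ≥0∞) : Prop :=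
  Measurable f ∧ (∫⁻ v : V → ℝ, f v) = 1 ∧ ∀ v, f v ≠ 0 ∧ f v ≠ ⊤

/-- A family of interventional densities: `obs` is the observational density
`f(v)`, and `int X x` is the interventional density `f(v | do(X = x))`. -/
structure IntFamily (V : Type) [Fintype V] [DecidableEq V] where
  obs : (V → ℝ) → ℝ≥0∞
  int : Finset V → (V → ℝ) → (V → ℝ) → ℝ≥0∞

-- Parents of a node, as a finset.
open Classical in
noncomputable def paFin (G : MG V) (i : V) : Finset V :=
  Finset.univ.filter fun j => G.DirE j i

-- The family `F` is consistent with the causal DAG `G` (i.e. `G` is a causal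
-- Bayesian network compatible with `F`): every interventional density satisfies
-- the truncated factorization.
open Classical in
def Consistent (F : IntFamily V) (G : MG V) : Prop :=
  (∀ x, F.int ∅ x = F.obs) ∧
    ∀ (X : Finset V) (x v : V → ℝ),
      F.int X x v =
        if ∀ i ∈ X, v i = x i then
          ∏ i ∈ Xᶜ, condD F.obs {i} (paFin G i) v
        else 0

/-- The conditional interventional density `f(a | do(x), z)` (where the value of
the intervention `do(X = x)` is read off from `v`). -/
noncomputable def doCond (F : IntFamily V) (X A Z : Finset V) (v : V → ℝ) : ℝ≥0∞ :=
  marg (F.int X v) (A ∪ Z ∪ X) v / marg (F.int X v) (Z ∪ X) v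

/-- The conditional adjustment functional
`∫ f(y | x, z, s) f(s | z) ds`  (resp. `f(y | x, z)` if `S = ∅`). -/
noncomputable def adjRHS (f : (V → ℝ) → ℝ≥0∞) (X Y Z S : Finset V) (v : V → ℝ) :
    ℝ≥0∞ :=
  if S = ∅ then condD f Y (X ∪ Z) v
  else
    ∫⁻ w : {x : V // x ∈ S} → ℝ,
      condD f Y (X ∪ Z ∪ S) (override v S w) * condD f S Z (override v S w)

/-- `S` is a conditional adjustment set relative to `(X, Y, Z)` in the causal
MPDAG `G`: for every density consistent with `G` (i.e. with every DAG in `[G]`),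
`f(y | do(x), z)` is given by the conditional adjustment functional. -/
def CondAdjSet (G : MG V) (X Y Z S : Finset V) : Prop :=
  ∀ F : IntFamily V, IsDensity F.obs → (∀ D ∈ G.rep, Consistent F D) →
    ∀ v : V → ℝ, doCond F X Y Z v = adjRHS F.obs X Y Z S v

/-- `S` is a conditional adjustment set relative to `(X, Y, Z)` in the causal DAG `D`. -/
def CondAdjSetDAG (D : MG V) (X Y Z S : Finset V) : Prop :=
  ∀ F : IntFamily V, IsDensity F.obs → Consistent F D →
    ∀ v : V → ℝ, doCond F X Y Z v = adjRHS F.obs X Y Z S v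

/-- `W` is an (unconditional) adjustment set relative to `(X, Y)` in the causal MPDAG `G`. -/
def AdjSet (G : MG V) (X Y W : Finset V) : Prop :=
  ∀ F : IntFamily V, IsDensity F.obs → (∀ D ∈ G.rep, Consistent F D) →
    ∀ v : V → ℝ, doCond F X Y ∅ v = adjRHS F.obs X Y ∅ W v

end Density

section Criteria

variable {V : Type}

/-- Every proper possibly causal path from `X` to `Y` in `G` starts with a
directed edge out of `X`. -/
def StartsDirected (G : MG V) (X Y : Set V) : Prop :=
  ∀ p n, G.IsPathFromTo p n X Y → Proper p n X → G.PossCausal p n → G.DirE (p 0) (p 1)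

/-- `W` blocks all proper non-causal definite status paths from `X` to `Y` in `G`. -/
def BlocksNonCausal (G : MG V) (X Y W : Set V) : Prop :=
  ∀ p n, G.IsPathFromTo p n X Y → Proper p n X → ¬ G.PossCausal p n →
    G.DefStatus p n → G.Blocks W p n

/-- The conditional adjustment criterion relative to `(X, Y, Z)` in an MPDAG. -/
def CondAdjCrit (G : MG V) (X Y Z S : Set V) : Prop :=
  StartsDirected G X Y ∧ S ∩ G.Forb X Y = ∅ ∧ BlocksNonCausal G X Y (S ∪ Z)

/-- The (unconditional) adjustment criterion relative to `(X, Y)` in an MPDAG. -/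
def AdjCrit (G : MG V) (X Y W : Set V) : Prop :=
  StartsDirected G X Y ∧ W ∩ G.Forb X Y = ∅ ∧ BlocksNonCausal G X Y W

/-- `W` blocks all proper non-causal paths from `X` to `Y` in a DAG. -/
def BlocksNonCausalD (G : MG V) (X Y W : Set V) : Prop :=
  ∀ p n, G.IsPathFromTo p n X Y → Proper p n X → ¬ G.Causal p n → G.Blocks W p n

/-- The conditional adjustment criterion relative to `(X, Y, Z)` in a DAG. -/
def CondAdjCritDAG (G : MG V) (X Y Z S : Set V) : Prop :=
  S ∩ G.ForbD X Y = ∅ ∧ BlocksNonCausalD G X Y (S ∪ Z)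

end Criteria

/-- A set, regarded as a finset (the node type is finite). -/
noncomputable def setFin {V : Type} [Fintype V] (s : Set V) : Finset V :=
  s.toFinite.toFinset

end CondAdj

theorem test_dummy : True := trivial

namespace CondAdj
namespace MG

variable {V : Type} (G : MG V)

lemma rep_spec' {D : MG V} (hD : D ∈ G.rep) :
    D.IsDAG ∧ (∀ a b, D.Adj a b ↔ G.Adj a b) ∧ (∀ a b, G.DirE a b → D.DirE a b) ∧
      ∀ a b c, (D.UnshieldedCollider a b c ↔ G.UnshieldedCollider a b c) := hD

lemma dirE_of_arrow' (hP : G.IsPDG) {a b : V} (h : G.m a b = Mark.arrow) :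
    G.DirE a b := by
  have hadj : G.Adj a b := by simp [MG.Adj, h]
  rcases hP.1 a b hadj with h1 | h1 | h1
  · exact h1
  · rw [h1.2] at h; exact Mark.noConfusion h
  · rw [h1.1] at h; exact Mark.noConfusion h

lemma causal_transGen' {p : ℕ → V} {n : ℕ} (hc : G.Causal p n) :
    ∀ i j, i < j → j ≤ n → Relation.TransGen G.DirE (p i) (p j) := by
  intro i j hij hjn
  induction j with
  | zero => omega
  | succ k ih =>
    rcases Nat.lt_or_ge i k with h | h
    · exact (ih h (by omega)).tail (hc k (by omega))
    · have hik : i = k := by omega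
      subst hik
      exact Relation.TransGen.single (hc i (by omega))

lemma causal_possCausal' (hP : G.IsPDG) {p : ℕ → V} {n : ℕ} (hc : G.Causal p n) :
    G.PossCausal p n := by
  intro i j hij hjn harrow
  have hd : G.DirE (p j) (p i) := G.dirE_of_arrow' hP harrow
  exact hP.2 (p i) ((G.causal_transGen' hc i j hij hjn).tail hd)

lemma isPath_shift' {p : ℕ → V} {n i : ℕ} (hp : G.IsPath p n) (hin : i < n) :
    G.IsPath (fun t => p (i + t)) (n - i) := by
  obtain ⟨h1, h2, h3⟩ := hp
  refine ⟨by omega, ?_, ?_⟩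
  · intro a ha b hb he
    have := h2 (i + a) (by omega) (i + b) (by omega) he
    omega
  · intro a ha
    show G.Adj (p (i + a)) (p (i + a + 1))
    exact h3 (i + a) (by omega)

lemma possCausal_shift' {p : ℕ → V} {n i : ℕ} (hpc : G.PossCausal p n) (hin : i ≤ n) :
    G.PossCausal (fun t => p (i + t)) (n - i) := by
  intro a b hab hbn
  exact hpc (i + a) (i + b) (by omega) (by omega)

lemma shortcut' {p : ℕ → V} {n a : ℕ} (hp : G.IsPath p n) (hpc : G.PossCausal p n)
    (ha : a + 2 ≤ n) (hadj : G.Adj (p a) (p (a + 2))) :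
    ∃ r k, G.IsPath r k ∧ G.PossCausal r k ∧ r 0 = p 0 ∧ r k = p n ∧ k < n := by
  obtain ⟨h1, h2, h3⟩ := hp
  refine ⟨fun t => if t ≤ a then p t else p (t + 1), n - 1,
    ⟨by omega, ?_, ?_⟩, ?_, by simp, ?_, by omega⟩
  · intro i hi j hj he
    rcases le_or_gt i a with hia | hia <;> rcases le_or_gt j a with hja | hja
    · simp only [if_pos hia, if_pos hja] at he
      exact h2 i (by omega) j (by omega) he
    · simp only [if_pos hia, if_neg (by omega : ¬ j ≤ a)] at he
      have := h2 i (by omega) (j + 1) (by omega) he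
      omega
    · simp only [if_neg (by omega : ¬ i ≤ a), if_pos hja] at he
      have := h2 (i + 1) (by omega) j (by omega) he
      omega
    · simp only [if_neg (by omega : ¬ i ≤ a), if_neg (by omega : ¬ j ≤ a)] at he
      have := h2 (i + 1) (by omega) (j + 1) (by omega) he
      omega
  · intro i hi
    rcases lt_trichotomy i a with h | h | h
    · simp only [if_pos (by omega : i ≤ a), if_pos (by omega : i + 1 ≤ a)]
      exact h3 i (by omega)
    · subst h
      simp only [if_pos le_rfl, if_neg (by omega : ¬ i + 1 ≤ i)]
      exact hadj
    · simp only [if_neg (by omega : ¬ i ≤ a), if_neg (by omega : ¬ i + 1 ≤ a)]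
      exact h3 (i + 1) (by omega)
  · intro i j hij hjk
    rcases le_or_gt i a with hia | hia <;> rcases le_or_gt j a with hja | hja
    · simp only [if_pos hia, if_pos hja]
      exact hpc i j hij (by omega)
    · simp only [if_pos hia, if_neg (by omega : ¬ j ≤ a)]
      exact hpc i (j + 1) (by omega) (by omega)
    · exact absurd hij (by omega)
    · simp only [if_neg (by omega : ¬ i ≤ a), if_neg (by omega : ¬ j ≤ a)]
      exact hpc (i + 1) (j + 1) (by omega) (by omega)
  · show (if n - 1 ≤ a then p (n - 1) else p (n - 1 + 1)) = p n
    rw [if_neg (by omega : ¬ n - 1 ≤ a), (by omega : n - 1 + 1 = n)]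

/-- Core lemma: in an MPDAG there is no possibly causal path from `u` to `v`
together with a directed path from `v` back to `u`. -/
lemma no_back' (hG : G.IsMPDAG) {u v : V}
    (hex : ∃ p n, G.IsPath p n ∧ G.PossCausal p n ∧ p 0 = u ∧ p n = v)
    (hback : Relation.TransGen G.DirE v u) : False := by
  classical
  have hexn : ∃ k, ∃ r : ℕ → V, G.IsPath r k ∧ G.PossCausal r k ∧ r 0 = u ∧ r k = v := by
    obtain ⟨p, k, h1, h2, h3, h4⟩ := hex
    exact ⟨k, p, h1, h2, h3, h4⟩
  obtain ⟨p, hp, hpc, hp0, hpn⟩ := Nat.find_spec hexn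
  set n := Nat.find hexn with hn
  have h1n : 1 ≤ n := hp.1
  have hchord : ∀ a, a + 2 ≤ n → ¬ G.Adj (p a) (p (a + 2)) := by
    intro a ha hadj
    obtain ⟨r, k, hr1, hr2, hr3, hr4, hk⟩ := G.shortcut' hp hpc ha hadj
    exact Nat.find_min hexn hk ⟨r, hr1, hr2, by rw [hr3, hp0], by rw [hr4, hpn]⟩
  -- choose a DAG in the class in which the first edge is directed forward
  have hD : ∃ D ∈ G.rep, D.DirE (p 0) (p 1) := by
    rcases hG.1.1 (p 0) (p 1) (hp.2.2 0 h1n) with h | h | h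
    · obtain ⟨D, hDm⟩ := hG.2.1
      exact ⟨D, hDm, (G.rep_spec' hDm).2.2.1 _ _ h⟩
    · exact absurd h.1 (hpc 0 1 one_pos h1n)
    · exact (hG.2.2 (p 0) (p 1) (Or.inl h)).1
  obtain ⟨D, hDm, hD1⟩ := hD
  obtain ⟨hDdag, hDadj, hDdir, hDcol⟩ := G.rep_spec' hDm
  -- the whole path is directed forward in D
  have hall : ∀ i < n, D.DirE (p i) (p (i + 1)) := by
    intro i
    induction i with
    | zero => intro _; exact hD1
    | succ k ih =>
      intro hk
      have hprev : D.DirE (p k) (p (k + 1)) := ih (by omega)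
      rcases hG.1.1 (p (k + 1)) (p (k + 2)) (hp.2.2 (k + 1) hk) with h | h | h
      · exact hDdir _ _ h
      · exact absurd h.1 (hpc (k + 1) (k + 2) (by omega) (by omega))
      · rcases hDdag.1 _ _ ((hDadj _ _).2 (hp.2.2 (k + 1) hk)) with hd | hd
        · exact hd
        · exfalso
          have hcol : D.UnshieldedCollider (p k) (p (k + 1)) (p (k + 2)) := by
            refine ⟨hprev, hd, ?_, ?_⟩
            · intro he
              have := hp.2.1 k (by omega) (k + 2) (by omega) he
              omega
            · intro hadj
              exact hchord k (by omega) ((hDadj _ _).1 hadj)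
          have := ((hDcol _ _ _).1 hcol).2.1.1
          rw [h.2] at this
          exact Mark.noConfusion this
  have hfwd : Relation.TransGen D.DirE u v := by
    rw [← hp0, ← hpn]
    exact D.causal_transGen' hall 0 n (by omega) le_rfl
  have hbackD : Relation.TransGen D.DirE v u :=
    Relation.TransGen.mono (fun a b h => hDdir a b h) _ _ hback
  exact hDdag.2 u (hfwd.trans hbackD)

/-- Assembling the concatenated path, given the separation and no-cross-edge facts. -/
lemma assemble' {x z : V} {p : ℕ → V} {n : ℕ} {q : ℕ → V} {m : ℕ}
    (hp : G.IsPath p n) (hp0 : p 0 = x)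
    (hq : G.IsPath q m) (hqm : q m = z) (hpq : p n = q 0)
    (hppc : G.PossCausal p n) (hqpc : G.PossCausal q m)
    (sep : ∀ i ≤ n, ∀ j ≤ m, p i = q j → i = n ∧ j = 0)
    (cross : ∀ i ≤ n, ∀ j, 1 ≤ j → j ≤ m → G.m (q j) (p i) ≠ Mark.arrow) :
    G.IsPath (fun i => if i ≤ n then p i else q (i - n)) (n + m) ∧
    G.PossCausal (fun i => if i ≤ n then p i else q (i - n)) (n + m) ∧
    (fun i => if i ≤ n then p i else q (i - n)) 0 = x ∧
    (fun i => if i ≤ n then p i else q (i - n)) (n + m) = z := by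
  have hn1 := hp.1
  have hm1 := hq.1
  refine ⟨⟨by omega, ?_, ?_⟩, ?_, by simp [hp0], ?_⟩
  · intro i hi j hj he
    rcases le_or_gt i n with h1 | h1 <;> rcases le_or_gt j n with h2 | h2
    · simp only [if_pos h1, if_pos h2] at he
      exact hp.2.1 i h1 j h2 he
    · simp only [if_pos h1, if_neg (by omega : ¬ j ≤ n)] at he
      have := sep i h1 (j - n) (by omega) he
      omega
    · simp only [if_neg (by omega : ¬ i ≤ n), if_pos h2] at he
      have := sep j h2 (i - n) (by omega) he.symm
      omega
    · simp only [if_neg (by omega : ¬ i ≤ n), if_neg (by omega : ¬ j ≤ n)] at he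
      have := hq.2.1 (i - n) (by omega) (j - n) (by omega) he
      omega
  · intro i hilt
    rcases lt_trichotomy i n with h1 | h1 | h1
    · simp only [if_pos (by omega : i ≤ n), if_pos (by omega : i + 1 ≤ n)]
      exact hp.2.2 i h1
    · subst h1
      simp only [if_pos le_rfl, if_neg (by omega : ¬ i + 1 ≤ i)]
      rw [(by omega : i + 1 - i = 1), hpq]
      exact hq.2.2 0 (by omega)
    · simp only [if_neg (by omega : ¬ i ≤ n), if_neg (by omega : ¬ i + 1 ≤ n)]
      rw [(by omega : i + 1 - n = (i - n) + 1)]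
      exact hq.2.2 (i - n) (by omega)
  · intro i j hij hjle
    rcases le_or_gt j n with h2 | h2
    · simp only [if_pos (by omega : i ≤ n), if_pos h2]
      exact hppc i j hij h2
    · rcases le_or_gt i n with h1 | h1
      · simp only [if_pos h1, if_neg (by omega : ¬ j ≤ n)]
        intro har
        exact cross i h1 (j - n) (by omega) (by omega) har
      · simp only [if_neg (by omega : ¬ i ≤ n), if_neg (by omega : ¬ j ≤ n)]
        exact hqpc (i - n) (j - n) (by omega) (by omega)
  · show (if n + m ≤ n then p (n + m) else q (n + m - n)) = z
    rw [if_neg (by omega : ¬ n + m ≤ n), (by omega : n + m - n = m), hqm]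

end MG
end CondAdj

/-- concatenation of (possibly) causal paths: for distinct
nodes `x, y, z` of an MPDAG `G`, a path `p` from `x` to `y` and a path `q` from
`y` to `z`: (i) if `p` is possibly causal and `q` is causal, then `p` and `q`
share no node other than `y` and the concatenation `p ⊕ q` is a possibly causal
path from `x` to `z`; (ii) likewise if `p` is causal and `q` is possibly
causal. -/
theorem concat_possCausal_mpdag
    {V : Type} (G : CondAdj.MG V) (hG : G.IsMPDAG)
    (x y z : V) (hxy : x ≠ y) (hxz : x ≠ z) (hyz : y ≠ z)
    (p : ℕ → V) (n : ℕ) (q : ℕ → V) (m : ℕ)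
    (hp : G.IsPath p n) (hp0 : p 0 = x) (hpn : p n = y)
    (hq : G.IsPath q m) (hq0 : q 0 = y) (hqm : q m = z) :
    (G.PossCausal p n → G.Causal q m →
      ((∀ i ≤ n, ∀ j ≤ m, p i = q j → i = n ∧ j = 0) ∧
        G.IsPath (fun i => if i ≤ n then p i else q (i - n)) (n + m) ∧
        G.PossCausal (fun i => if i ≤ n then p i else q (i - n)) (n + m) ∧
        (fun i => if i ≤ n then p i else q (i - n)) 0 = x ∧
        (fun i => if i ≤ n then p i else q (i - n)) (n + m) = z)) ∧
    (G.Causal p n → G.PossCausal q m →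
      ((∀ i ≤ n, ∀ j ≤ m, p i = q j → i = n ∧ j = 0) ∧
        G.IsPath (fun i => if i ≤ n then p i else q (i - n)) (n + m) ∧
        G.PossCausal (fun i => if i ≤ n then p i else q (i - n)) (n + m) ∧
        (fun i => if i ≤ n then p i else q (i - n)) 0 = x ∧
        (fun i => if i ≤ n then p i else q (i - n)) (n + m) = z)) := by
  have hPDG := hG.1
  have hacyc := hPDG.2
  constructor
  · -- (i) p possibly causal, q causal
    intro hppc hqc
    have hqpc := G.causal_possCausal' hPDG hqc
    have sep : ∀ i ≤ n, ∀ j ≤ m, p i = q j → i = n ∧ j = 0 := by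
      intro i hi j hj he
      rcases Nat.eq_zero_or_pos j with hj0 | hj1
      · subst hj0
        have hipn : p i = p n := by rw [he, hq0, hpn]
        exact ⟨hp.2.1 i hi n le_rfl hipn, rfl⟩
      · exfalso
        rcases eq_or_lt_of_le hi with hin | hin
        · have hqq : q 0 = q j := by
            rw [← hq0] at hpn
            rw [← hpn, ← hin, he]
          have := hq.2.1 0 (by omega) j hj hqq
          omega
        · refine G.no_back' hG (u := p i) (v := y)
            ⟨fun t => p (i + t), n - i, G.isPath_shift' hp hin,
              G.possCausal_shift' hppc (le_of_lt hin), by simp, ?_⟩ ?_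
          · show p (i + (n - i)) = y
            rw [(by omega : i + (n - i) = n), hpn]
          · rw [he, ← hq0]
            exact G.causal_transGen' hqc 0 j (by omega) hj
    have cross : ∀ i ≤ n, ∀ j, 1 ≤ j → j ≤ m → G.m (q j) (p i) ≠ CondAdj.Mark.arrow := by
      intro i hi j hj1 hjm har
      have hd : G.DirE (q j) (p i) := G.dirE_of_arrow' hPDG har
      have hyqj : Relation.TransGen G.DirE y (q j) := by
        rw [← hq0]
        exact G.causal_transGen' hqc 0 j (by omega) hjm
      rcases eq_or_lt_of_le hi with hin | hin
      · have hd' : G.DirE (q j) y := by rw [← hpn, ← hin]; exact hd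
        exact hacyc y (hyqj.tail hd')
      · refine G.no_back' hG (u := p i) (v := y)
          ⟨fun t => p (i + t), n - i, G.isPath_shift' hp hin,
            G.possCausal_shift' hppc (le_of_lt hin), by simp, ?_⟩ (hyqj.tail hd)
        show p (i + (n - i)) = y
        rw [(by omega : i + (n - i) = n), hpn]
    exact ⟨sep, G.assemble' hp hp0 hq hqm (hpn.trans hq0.symm) hppc hqpc sep cross⟩
  · -- (ii) p causal, q possibly causal
    intro hpc hqpc
    have hppc := G.causal_possCausal' hPDG hpc
    have qpref : ∀ j, 1 ≤ j → j ≤ m → G.IsPath q j ∧ G.PossCausal q j := by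
      intro j h1 h2
      exact ⟨⟨h1, fun a ha b hb => hq.2.1 a (by omega) b (by omega),
          fun a ha => hq.2.2 a (by omega)⟩,
        fun a b hab hbj => hqpc a b hab (by omega)⟩
    have sep : ∀ i ≤ n, ∀ j ≤ m, p i = q j → i = n ∧ j = 0 := by
      intro i hi j hj he
      rcases Nat.eq_zero_or_pos j with hj0 | hj1
      · subst hj0
        have hipn : p i = p n := by rw [he, hq0, hpn]
        exact ⟨hp.2.1 i hi n le_rfl hipn, rfl⟩
      · exfalso
        rcases eq_or_lt_of_le hi with hin | hin
        · have hqq : q 0 = q j := by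
            rw [← hq0] at hpn
            rw [← hpn, ← hin, he]
          have := hq.2.1 0 (by omega) j hj hqq
          omega
        · refine G.no_back' hG (u := y) (v := q j)
            ⟨q, j, (qpref j hj1 hj).1, (qpref j hj1 hj).2, hq0, rfl⟩ ?_
          rw [← he, ← hpn]
          exact G.causal_transGen' hpc i n hin le_rfl
    have cross : ∀ i ≤ n, ∀ j, 1 ≤ j → j ≤ m → G.m (q j) (p i) ≠ CondAdj.Mark.arrow := by
      intro i hi j hj1 hjm har
      have hd : G.DirE (q j) (p i) := G.dirE_of_arrow' hPDG har
      have hback : Relation.TransGen G.DirE (q j) y := by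
        rcases eq_or_lt_of_le hi with hin | hin
        · refine Relation.TransGen.single ?_
          rw [← hpn, ← hin]
          exact hd
        · refine Relation.TransGen.head hd ?_
          rw [← hpn]
          exact G.causal_transGen' hpc i n hin le_rfl
      exact G.no_back' hG (u := y) (v := q j)
        ⟨q, j, (qpref j hj1 hjm).1, (qpref j hj1 hjm).2, hq0, rfl⟩ hback
    exact ⟨sep, G.assemble' hp hp0 hq hqm (hpn.trans hq0.symm) hppc hqpc sep cross⟩
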